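/- The triple Ω(x) = C_ω, F(x) = C₁√(x(1-x)), G(x) = C₁(1-2x)√(1+x)/(2√x) satisfies the inviscid equations for b = 1: F·Ω' = 0, (Ω²)' + (1/2)(1-x²)(F²)''' = 0 on (0,1), and the continuity relation G(x) = √(1-x²)·F'(x) on (0,1). -/

import Mathlib

open Real Set

theorem stmt_10 (Cω C₁ : ℝ) :
    let Ω : ℝ → ℝ := fun _ => Cω
    let F : ℝ → ℝ := fun x => C₁ * Real.sqrt (x * (1 - x))
    let G : ℝ → ℝ := fun x => C₁ * (1 - 2*x) * Real.sqrt (1 + x) / (2 * Real.sqrt x)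
    ∀ x ∈ Ioo (0:ℝ) 1,
      F x * deriv Ω x = 0
      ∧ deriv (fun y => Ω y ^ 2) x
          + (1/2) * (1 - x^2) * deriv (deriv (deriv (fun y => F y ^ 2))) x = 0
      ∧ G x = Real.sqrt (1 - x^2) * deriv F x := by
  intro Ω F G x hx
  obtain ⟨hx0, hx1⟩ := hx
  have hx1' : (0:ℝ) < 1 - x := by linarith
  refine ⟨?_, ?_, ?_⟩
  · simp [Ω]
  · -- F^2 agrees with a polynomial on Ioo 0 1
    have hopen : IsOpen (Ioo (0:ℝ) 1) := isOpen_Ioo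
    have hmem : Ioo (0:ℝ) 1 ∈ nhds x := hopen.mem_nhds ⟨hx0, hx1⟩
    have heq : (fun y => F y ^ 2) =ᶠ[nhds x] (fun y => C₁^2 * y - C₁^2 * y^2) := by
      filter_upwards [hmem] with y hy
      have hy0 : 0 ≤ y * (1 - y) := by nlinarith [hy.1, hy.2]
      simp only [F, mul_pow, Real.sq_sqrt hy0]
      ring
    have hd1 : deriv (fun y : ℝ => C₁^2 * y - C₁^2 * y^2)
        = fun y => C₁^2 - C₁^2 * (2 * y) := by
      funext y
      have h : HasDerivAt (fun y : ℝ => C₁^2 * y - C₁^2 * y^2)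
          (C₁^2 * 1 - C₁^2 * (2 * y ^ 1)) y :=
        ((hasDerivAt_id y).const_mul (C₁^2)).sub ((hasDerivAt_pow 2 y).const_mul (C₁^2))
      rw [h.deriv]; ring
    have hd2 : deriv (fun y : ℝ => C₁^2 - C₁^2 * (2 * y)) = fun _ => -(C₁^2 * 2) := by
      funext y
      have h : HasDerivAt (fun y : ℝ => C₁^2 - C₁^2 * (2 * y))
          (0 - C₁^2 * (2 * 1)) y :=
        (hasDerivAt_const y _).sub (((hasDerivAt_id y).const_mul 2).const_mul (C₁^2))
      rw [h.deriv]; ring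
    have hD : deriv (fun y => F y ^ 2) =ᶠ[nhds x]
        deriv (fun y : ℝ => C₁^2 * y - C₁^2 * y^2) := heq.deriv
    have hD2 : deriv (deriv (fun y => F y ^ 2)) =ᶠ[nhds x]
        deriv (deriv (fun y : ℝ => C₁^2 * y - C₁^2 * y^2)) := hD.deriv
    have hD3 : deriv (deriv (deriv (fun y => F y ^ 2))) x
        = deriv (deriv (deriv (fun y : ℝ => C₁^2 * y - C₁^2 * y^2))) x := hD2.deriv.eq_of_nhds
    rw [hD3, hd1, hd2]
    simp [Ω]
  · -- continuity relation
    have hne : x * (1 - x) ≠ 0 := by positivity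
    have hder : HasDerivAt (fun y : ℝ => y * (1 - y)) (1 - 2*x) x := by
      have : HasDerivAt (fun y : ℝ => y * (1 - y)) (1 * (1 - x) + x * (0 - 1)) x :=
        (hasDerivAt_id x).mul ((hasDerivAt_const x 1).sub (hasDerivAt_id x))
      convert this using 1; ring
    have hs : HasDerivAt (fun y : ℝ => Real.sqrt (y * (1 - y)))
        ((1 - 2*x) / (2 * Real.sqrt (x * (1 - x)))) x := hder.sqrt hne
    have hF : deriv F x = C₁ * ((1 - 2*x) / (2 * Real.sqrt (x * (1 - x)))) :=
      ((hs.const_mul C₁)).deriv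
    rw [hF]
    have hsx : Real.sqrt x ≠ 0 := by positivity
    have hs1x : Real.sqrt (1 - x) ≠ 0 := by positivity
    have e1 : Real.sqrt (x * (1 - x)) = Real.sqrt x * Real.sqrt (1 - x) :=
      Real.sqrt_mul hx0.le _
    have e2 : Real.sqrt (1 - x^2) = Real.sqrt (1 - x) * Real.sqrt (1 + x) := by
      rw [← Real.sqrt_mul hx1'.le]; ring_nf
    rw [e1, e2]
    simp only [G]
    field_simp
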